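/- There exists a subshift Σ such that h_𝒞(Σ̄) < h_𝒞(Σ) = h_top(Σ), and such that moreover h*_𝒞(Σ̄) < h*_𝒞(Σ) = h_top(Σ). In particular, the left constraint entropies of a subshift and of its time reversal can differ, and a subshift of quasi-finite type can satisfy h_𝒞(Σ) = h_top(Σ). -/

import Mathlib

open Filter Set MeasureTheory

namespace QFTPaper

variable {A : Type*} {B : Type*}

/-- The left shift on bi-infinite sequences over the alphabet `A`. -/
def shift (x : ℤ → A) : ℤ → A := fun n => x (n + 1)

/-- A subshift: a closed, shift-invariant subset of `A^ℤ`. -/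
def IsSubshift [TopologicalSpace A] (X : Set (ℤ → A)) : Prop :=
  IsClosed X ∧ shift '' X = X

/-- The finite word `w` occurs in `x` at position `k`. -/
def OccursAt (w : List A) (x : ℤ → A) (k : ℤ) : Prop :=
  ∀ i : Fin w.length, x (k + (i : ℕ)) = w.get i

/-- The language of `X`: words of length `n` occurring in elements of `X`
(at position `0`, which is no restriction by shift-invariance). -/
def Lang (X : Set (ℤ → A)) (n : ℕ) : Set (List A) :=
  { w | w.length = n ∧ ∃ x ∈ X, OccursAt w x 0 }

/-- Topological entropy of a subshift. -/
noncomputable def hTop (X : Set (ℤ → A)) : ℝ :=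
  limsup (fun n : ℕ => Real.log (Nat.card ↥(Lang X n)) / (n : ℝ)) atTop

/-- Follower set of the finite word `w = A₋ₙ…A₀` (listed from `A₋ₙ` to `A₀`):
the set of one-sided sequences `B₀B₁B₂…` with `B ∈ X` and `B₋ₙ…B₀ = A₋ₙ…A₀`,
realized by requiring `w` to occur in `B` at positions `0,…,n` and reading off
the tail of `B` starting at the position of the last letter of `w`.
For the empty word this gives `X₊` (by shift-invariance). -/
def fol (X : Set (ℤ → A)) (w : List A) : Set (ℕ → A) :=
  { y | ∃ B ∈ X, (∀ i : Fin w.length, B ((i : ℕ) : ℤ) = w.get i) ∧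
        ∀ k : ℕ, y k = B ((w.length : ℤ) - 1 + (k : ℤ)) }

/-- `w = A₋ₙ…A₀` is a left constraint:
`∅ ≠ fol(A₋ₙ…A₀) ⊊ fol(A₋ₙ₊₁…A₀)`. -/
def IsLeftConstraint (X : Set (ℤ → A)) (w : List A) : Prop :=
  w ≠ [] ∧ fol X w ≠ ∅ ∧ fol X w ⊂ fol X w.tail

/-- `𝒞(X, n)`: the set of left constraints of length `n`. -/
def LC (X : Set (ℤ → A)) (n : ℕ) : Set (List A) :=
  { w | w.length = n ∧ IsLeftConstraint X w }

/-- The left constraint entropy `h_𝒞(X) = limsup (1/n) log⁺ #𝒞(X,n)`. -/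
noncomputable def hC (X : Set (ℤ → A)) : ℝ :=
  limsup (fun n : ℕ => max 0 (Real.log (Nat.card ↥(LC X n))) / (n : ℝ)) atTop

/-- The time-reversed subshift `X̄`. -/
def rev (X : Set (ℤ → A)) : Set (ℤ → A) :=
  (fun x : ℤ → A => fun n : ℤ => x (-n)) '' X

/-- The symmetric constraint entropy `h_𝒮𝒞(X) = min (h_𝒞(X), h_𝒞(X̄))`. -/
noncomputable def hSC (X : Set (ℤ → A)) : ℝ := min (hC X) (hC (rev X))

/-- Subshift of quasi-finite type: `h_𝒮𝒞(X) < h_top(X)`. -/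
def IsQFT [TopologicalSpace A] (X : Set (ℤ → A)) : Prop :=
  IsSubshift X ∧ hSC X < hTop X

/-- The word `B₋ₘ…B₀` read off from a one-sided past `b` (where `b j = B₋ⱼ`). -/
def wordOf (b : ℕ → A) (m : ℕ) : List A :=
  (List.range (m + 1)).map fun j => b (m - j)

/-- An extendable left constraint: a left constraint `A₋ₙ…A₀` which admits a
one-sided past `B` extending it such that `B₋ₘ…B₀` is again a left constraint
for infinitely many `m`. -/
def IsExtendable (X : Set (ℤ → A)) (w : List A) : Prop :=
  IsLeftConstraint X w ∧
  ∃ b : ℕ → A, wordOf b (w.length - 1) = w ∧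
    ∀ N : ℕ, ∃ m, N ≤ m ∧ IsLeftConstraint X (wordOf b m)

/-- `𝒞*(X, n)`: the set of extendable left constraints of length `n`. -/
def ELC (X : Set (ℤ → A)) (n : ℕ) : Set (List A) :=
  { w | w.length = n ∧ IsExtendable X w }

/-- The extendable left constraint entropy `h*_𝒞(X)`. -/
noncomputable def hCstar (X : Set (ℤ → A)) : ℝ :=
  limsup (fun n : ℕ => Real.log (Nat.card ↥(ELC X n)) / (n : ℝ)) atTop

/-- `h*_𝒮𝒞(X) = min (h*_𝒞(X), h*_𝒞(X̄))`. -/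
noncomputable def hSCstar (X : Set (ℤ → A)) : ℝ := min (hCstar X) (hCstar (rev X))

/-- Subshift of weak quasi-finite type: `h*_𝒮𝒞(X) < h_top(X)`. -/
def IsWeakQFT [TopologicalSpace A] (X : Set (ℤ → A)) : Prop :=
  IsSubshift X ∧ hSCstar X < hTop X

/-- Subshift of finite type: defined by excluding a finite set of finite words. -/
def IsSFT (X : Set (ℤ → A)) : Prop :=
  ∃ F : Finset (List A), X = { x | ∀ w ∈ F, ∀ k : ℤ, ¬ OccursAt w x k }

/-- Sofic subshift: the image of an SFT under a continuous shift-commuting map. -/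
def IsSofic [TopologicalSpace A] (X : Set (ℤ → A)) : Prop :=
  ∃ (B : Type) (_ : Fintype B) (Y : Set (ℤ → B)) (π : (ℤ → B) → (ℤ → A)),
    IsSFT Y ∧
    (letI : TopologicalSpace B := ⊥
     Continuous π) ∧
    (∀ x : ℤ → B, π (shift x) = shift (π x)) ∧ π '' Y = X


/-- Topological conjugacy of subshifts: a homeomorphism commuting with the shifts. -/
def Conjugate [TopologicalSpace A] [TopologicalSpace B]
    (X : Set (ℤ → A)) (Y : Set (ℤ → B)) : Prop :=
  ∃ φ : X ≃ₜ Y, ∀ x x' : X, (x' : ℤ → A) = shift (x : ℤ → A) →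
    (φ x' : ℤ → B) = shift (φ x : ℤ → B)

/-- The cylinder of a word of length `n` placed at positions `0,…,n-1`. -/
def cylSet (n : ℕ) (w : Fin n → A) : Set (ℤ → A) :=
  { x | ∀ i : Fin n, x ((i : ℕ) : ℤ) = w i }

/-- Entropy of the partition of `A^ℤ` into cylinders of length `n`. -/
noncomputable def blockEntropy [Fintype A] [MeasurableSpace A]
    (μ : Measure (ℤ → A)) (n : ℕ) : ℝ :=
  ∑ w : Fin n → A, Real.negMulLog ((μ (cylSet n w)).toReal)

/-- Kolmogorov–Sinai entropy of a shift-invariant measure on `A^ℤ`,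
computed with the natural (generating) partition into cylinders. -/
noncomputable def KSEntropy [Fintype A] [MeasurableSpace A]
    (μ : Measure (ℤ → A)) : ℝ :=
  ⨅ n : ℕ, blockEntropy μ (n + 1) / (n + 1)

/-- A maximum measure: an ergodic shift-invariant Borel probability measure
carried by `X` whose Kolmogorov–Sinai entropy equals the topological entropy of `X`. -/
def IsMaxMeasure [Fintype A] [MeasurableSpace A]
    (X : Set (ℤ → A)) (μ : Measure (ℤ → A)) : Prop :=
  IsProbabilityMeasure μ ∧ μ Xᶜ = 0 ∧ Ergodic shift μ ∧ KSEntropy μ = hTop X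

/-- The number of points of `X` fixed by the `n`-th power of the shift. -/
noncomputable def perCount (X : Set (ℤ → A)) (n : ℕ) : ℕ :=
  Nat.card {x : ℤ → A | x ∈ X ∧ shift^[n] x = x}

open Topology

-- ===================== our construction =====================

inductive Alph : Type
  | z | o | t | m
deriving DecidableEq

instance : Fintype Alph := ⟨{.z, .o, .t, .m}, by intro x; cases x <;> simp⟩

instance : TopologicalSpace Alph := ⊥
instance : DiscreteTopology Alph := ⟨rfl⟩

def g : Alph → Alph
  | .z => .z
  | .o => .o
  | .t => .o
  | .m => .z

lemma g_ne_m (a : Alph) : g a ≠ .m := by cases a <;> simp [g]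
lemma g_ne_t (a : Alph) : g a ≠ .t := by cases a <;> simp [g]
lemma g_z : g .z = .z := rfl
lemma g_o : g .o = .o := rfl
lemma g_fix {a : Alph} (h1 : a ≠ .m) (h2 : a ≠ .t) : g a = a := by
  cases a <;> simp_all [g]

def Nom (x : ℤ → Alph) : Prop := ∀ i, x i ≠ .m

def MX (x : ℤ → Alph) (p : ℤ) : Prop :=
  x p = .m ∧ (∀ i, i ≠ p → x i ≠ .m) ∧ ∀ k : ℤ, 0 < k → x (p + k) = g (x (p - k))

def MY (x : ℤ → Alph) (p : ℤ) : Prop :=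
  x p = .m ∧ (∀ i, i ≠ p → x i ≠ .m) ∧ ∀ k : ℤ, 0 < k → x (p - k) = g (x (p + k))

def XE : Set (ℤ → Alph) := {x | Nom x ∨ ∃ p, MX x p}
def YE : Set (ℤ → Alph) := {x | Nom x ∨ ∃ p, MY x p}

lemma mem_rev_iff {S : Set (ℤ → Alph)} {x : ℤ → Alph} :
    x ∈ rev S ↔ (fun n : ℤ => x (-n)) ∈ S := by
  constructor
  · rintro ⟨w, hw, rfl⟩
    have : (fun n : ℤ => (fun n : ℤ => w (-n)) (-n)) = w := by funext n; simp
    rwa [this]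
  · intro h
    exact ⟨_, h, by funext n; simp⟩

lemma rev_XE : rev XE = YE := by
  ext x
  rw [mem_rev_iff]
  constructor
  · rintro (h | ⟨p, h1, h2, h3⟩)
    · exact Or.inl fun i => by simpa using h (-i)
    · refine Or.inr ⟨-p, by simpa using h1, fun i hi => ?_, fun k hk => ?_⟩
      · have := h2 (-i) (by omega)
        simpa using this
      · have := h3 k hk
        beta_reduce at this
        rw [show -(p + k) = -p - k by ring, show -(p - k) = -p + k by ring] at this
        exact this
  · rintro (h | ⟨p, h1, h2, h3⟩)
    · exact Or.inl fun i => h (-i)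
    · refine Or.inr ⟨-p, by simpa using h1, fun i hi => ?_, fun k hk => ?_⟩
      · exact h2 (-i) (by omega)
      · have := h3 k hk
        beta_reduce
        rw [show -(-p + k) = p - k by ring, show -(-p - k) = p + k by ring]
        exact this

lemma translate_mem_XE (c : ℤ) {x : ℤ → Alph} (hx : x ∈ XE) :
    (fun n => x (n + c)) ∈ XE := by
  rcases hx with h | ⟨p, h1, h2, h3⟩
  · exact Or.inl fun i => h (i + c)
  · refine Or.inr ⟨p - c, by simpa using h1, fun i hi => h2 _ (by omega), fun k hk => ?_⟩
    have := h3 k hk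
    beta_reduce
    rw [show p - c + k + c = p + k by ring, show p - c - k + c = p - k by ring]
    exact this

lemma shift_XE : shift '' XE = XE := by
  apply Set.Subset.antisymm
  · rintro _ ⟨x, hx, rfl⟩
    exact translate_mem_XE 1 hx
  · intro x hx
    refine ⟨fun n => x (n + (-1)), translate_mem_XE (-1) hx, ?_⟩
    funext n
    simp [shift]

lemma XE_closed : IsClosed XE := by
  rw [← isOpen_compl_iff]
  have hco : XEᶜ = (⋃ (i : ℤ) (j : ℤ) (_ : i ≠ j), {x : ℤ → Alph | x i = .m ∧ x j = .m}) ∪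
      (⋃ (p : ℤ) (k : ℤ) (_ : 0 < k), {x : ℤ → Alph | x p = .m ∧ x (p + k) ≠ g (x (p - k))}) := by
    ext x
    simp only [Set.mem_compl_iff, Set.mem_union, Set.mem_iUnion, Set.mem_setOf_eq]
    constructor
    · intro hx
      by_cases hm : ∀ i, x i ≠ Alph.m
      · exact absurd (Or.inl hm) hx
      push_neg at hm
      obtain ⟨p, hp⟩ := hm
      by_cases hu : ∀ i, i ≠ p → x i ≠ Alph.m
      · by_cases he : ∀ k : ℤ, 0 < k → x (p + k) = g (x (p - k))
        · exact absurd (Or.inr ⟨p, hp, hu, he⟩) hx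
        push_neg at he
        obtain ⟨k, hk, hke⟩ := he
        exact Or.inr ⟨p, k, hk, hp, hke⟩
      push_neg at hu
      obtain ⟨j, hj, hjm⟩ := hu
      exact Or.inl ⟨j, p, hj, hjm, hp⟩
    · rintro (⟨i, j, hij, h1, h2⟩ | ⟨p, k, hk, h1, h2⟩) hX
      · rcases hX with h | ⟨q, hq1, hq2, _⟩
        · exact h i h1
        · have hi : i = q := by_contra fun h' => hq2 i h' h1
          have hj : j = q := by_contra fun h' => hq2 j h' h2
          exact hij (hi.trans hj.symm)
      · rcases hX with h | ⟨q, hq1, hq2, hq3⟩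
        · exact h p h1
        · have : p = q := by_contra fun h' => hq2 p h' h1
          subst this
          exact h2 (hq3 k hk)
  rw [hco]
  apply IsOpen.union
  · apply isOpen_iUnion; intro i; apply isOpen_iUnion; intro j; apply isOpen_iUnion; intro _
    have : {x : ℤ → Alph | x i = .m ∧ x j = .m} =
        (fun x : ℤ → Alph => x i) ⁻¹' {Alph.m} ∩ (fun x : ℤ → Alph => x j) ⁻¹' {Alph.m} := rfl
    rw [this]
    exact ((continuous_apply i).isOpen_preimage _ (isOpen_discrete _)).inter
      ((continuous_apply j).isOpen_preimage _ (isOpen_discrete _))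
  · apply isOpen_iUnion; intro p; apply isOpen_iUnion; intro k; apply isOpen_iUnion; intro _
    have : {x : ℤ → Alph | x p = .m ∧ x (p + k) ≠ g (x (p - k))} =
        (fun x : ℤ → Alph => (x p, (x (p + k), x (p - k)))) ⁻¹'
          {q : Alph × Alph × Alph | q.1 = .m ∧ q.2.1 ≠ g q.2.2} := rfl
    rw [this]
    exact ((continuous_apply p).prodMk ((continuous_apply (p + k)).prodMk
      (continuous_apply (p - k)))).isOpen_preimage _ (isOpen_discrete _)


-- ===================== word/fol machinery =====================

def L2F (w : List Alph) : ℤ → Alph := fun i =>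
  if h : 0 ≤ i ∧ i < w.length then w.get ⟨i.toNat, by omega⟩ else .z

lemma L2F_eq_get (w : List Alph) (i : ℕ) (h : i < w.length) :
    L2F w (i : ℤ) = w.get ⟨i, h⟩ := by
  have h' : (0:ℤ) ≤ (i:ℤ) ∧ (i:ℤ) < w.length := by omega
  simp only [L2F, dif_pos h', Int.toNat_natCast]

lemma L2F_ne_m_of_nom {w : List Alph} (hw : ∀ a ∈ w, a ≠ .m) (i : ℤ) : L2F w i ≠ .m := by
  unfold L2F
  split
  · exact hw _ (List.get_mem _ _)
  · intro h; cases h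

def Wit (S : Set (ℤ → Alph)) (w : List Alph) (y : ℕ → Alph) (B : ℤ → Alph) : Prop :=
  B ∈ S ∧ (∀ i : ℤ, 0 ≤ i → i < w.length → B i = L2F w i) ∧
    ∀ k : ℕ, y k = B ((w.length : ℤ) - 1 + (k : ℤ))

lemma fol_iff {S : Set (ℤ → Alph)} {w : List Alph} {y : ℕ → Alph} :
    y ∈ fol S w ↔ ∃ B, Wit S w y B := by
  constructor
  · rintro ⟨B, hB, hm, hr⟩
    refine ⟨B, hB, fun i h0 hn => ?_, hr⟩
    have hi : i = ((i.toNat : ℕ) : ℤ) := by omega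
    rw [hi, L2F_eq_get w i.toNat (by omega)]
    exact hm ⟨i.toNat, by omega⟩
  · rintro ⟨B, hB, hm, hr⟩
    refine ⟨B, hB, fun i => ?_, hr⟩
    rw [hm i (by positivity) (by exact_mod_cast i.isLt), L2F_eq_get w i i.isLt]

lemma L2F_cons (a : Alph) (w : List Alph) (i : ℤ) (h0 : 0 ≤ i) :
    L2F (a :: w) (i + 1) = L2F w i := by
  by_cases h : i < w.length
  · have hi : i = ((i.toNat : ℕ) : ℤ) := by omega
    rw [hi, show ((i.toNat : ℕ) : ℤ) + 1 = (((i.toNat + 1 : ℕ)) : ℤ) by push_cast; ring,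
      L2F_eq_get w i.toNat (by omega), L2F_eq_get (a :: w) (i.toNat + 1) (by simp; omega)]
    simp [List.get_cons_succ]
  · unfold L2F
    rw [dif_neg (by simp; omega), dif_neg (by simp; omega)]

lemma fol_sub_tail {S : Set (ℤ → Alph)} (hS : shift '' S = S) (w : List Alph) :
    fol S w ⊆ fol S w.tail := by
  cases' w with a w'
  · exact subset_rfl
  intro y hy
  rw [fol_iff] at hy ⊢
  obtain ⟨B, hB, hm, hr⟩ := hy
  refine ⟨shift B, ?_, fun i h0 hn => ?_, fun k => ?_⟩
  · rw [← hS]; exact ⟨B, hB, rfl⟩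
  · show B (i + 1) = L2F (List.tail (a :: w')) i
    rw [show List.tail (a :: w') = w' from rfl] at *
    rw [← L2F_cons a w' i h0]
    exact hm (i + 1) (by omega) (by simp at hn ⊢; omega)
  · show y k = B (((List.tail (a :: w')).length : ℤ) - 1 + k + 1)
    rw [hr k]
    congr 1
    simp [List.length_cons]
    ring

lemma fol_last {S : Set (ℤ → Alph)} {w : List Alph} {y : ℕ → Alph} (hw : w ≠ [])
    (hy : y ∈ fol S w) : y 0 = L2F w ((w.length : ℤ) - 1) := by
  rw [fol_iff] at hy
  obtain ⟨B, hB, hm, hr⟩ := hy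
  have hl : 1 ≤ w.length := List.length_pos_iff.mpr hw
  have h0 := hr 0
  have he : ((w.length : ℤ) - 1 + ((0:ℕ):ℤ)) = (w.length : ℤ) - 1 := by push_cast; ring
  rw [he] at h0
  rw [h0, hm ((w.length : ℤ) - 1) (by omega) (by omega)]

-- finiteness of word sets
lemma finite_of_len (S : Set (List Alph)) (n : ℕ) (h : ∀ w ∈ S, w.length = n) : S.Finite := by
  apply Set.Finite.subset (Set.finite_range (fun f : Fin n → Alph => List.ofFn f))
  intro w hw
  refine ⟨fun i => w.get (Fin.cast (h w hw).symm i), ?_⟩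
  apply List.ext_get (by simp [h w hw])
  intro i h1 h2
  simp [List.get_ofFn]

lemma LC_subset_Lang (S : Set (ℤ → Alph)) (n : ℕ) : LC S n ⊆ Lang S n := by
  rintro w ⟨hlen, hne, hfne, _⟩
  refine ⟨hlen, ?_⟩
  obtain ⟨y, hy⟩ := Set.nonempty_iff_ne_empty.mpr hfne
  obtain ⟨B, hB, hm, _⟩ := hy
  exact ⟨B, hB, fun i => by simpa using hm i⟩

lemma ELC_subset_LC (S : Set (ℤ → Alph)) (n : ℕ) : ELC S n ⊆ LC S n :=
  fun w ⟨hlen, hc, _⟩ => ⟨hlen, hc⟩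

lemma Lang_finite (S : Set (ℤ → Alph)) (n : ℕ) : (Lang S n).Finite :=
  finite_of_len _ n (fun _ hw => hw.1)

lemma LC_finite (S : Set (ℤ → Alph)) (n : ℕ) : (LC S n).Finite :=
  finite_of_len _ n (fun _ hw => hw.1)

-- ===================== limsup machinery =====================

lemma log_nat_nonneg (k : ℕ) : 0 ≤ Real.log k := by
  rcases Nat.eq_zero_or_pos k with h | h
  · simp [h]
  · exact Real.log_nonneg (by exact_mod_cast h)

lemma tendsto_aux (b C : ℝ) :
    Tendsto (fun n : ℕ => (Real.log C + Real.log ((n : ℝ) + 2)) / n + Real.log b)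
      atTop (𝓝 (Real.log b)) := by
  have h0 : Tendsto (fun n : ℕ => (Real.log C) / n) atTop (𝓝 0) :=
    tendsto_const_div_atTop_nhds_zero_nat _
  have hlog : Tendsto (fun x : ℝ => Real.log x / x) atTop (𝓝 0) :=
    Real.isLittleO_log_id_atTop.tendsto_div_nhds_zero
  have hcomp : Tendsto (fun n : ℕ => Real.log ((n : ℝ) + 2) / ((n : ℝ) + 2)) atTop (𝓝 0) :=
    hlog.comp (tendsto_atTop_add_const_right atTop 2 tendsto_natCast_atTop_atTop)
  have h1 : Tendsto (fun n : ℕ => Real.log ((n : ℝ) + 2) / n) atTop (𝓝 0) := by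
    apply squeeze_zero' (f := fun n : ℕ => Real.log ((n : ℝ) + 2) / n)
      (g := fun n : ℕ => 2 * (Real.log ((n : ℝ) + 2) / ((n : ℝ) + 2)))
    · filter_upwards [eventually_ge_atTop 1] with n hn
      have h2 : (0:ℝ) ≤ (n:ℝ) := Nat.cast_nonneg n
      exact div_nonneg (Real.log_nonneg (by linarith)) h2
    · filter_upwards [eventually_ge_atTop 2] with n hn
      have hn' : (2:ℝ) ≤ (n:ℝ) := by exact_mod_cast hn
      have hlogpos : 0 ≤ Real.log ((n:ℝ) + 2) := Real.log_nonneg (by linarith)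
      rw [mul_div_assoc', div_le_div_iff₀ (by linarith) (by linarith)]
      nlinarith [hlogpos, hn']
    · simpa using hcomp.const_mul 2
  have := (h0.add h1).add_const (Real.log b)
  simp only [add_zero, zero_add] at this
  convert this using 2 with n
  ring

lemma seq_le_aux {u : ℕ → ℕ} {b C : ℝ} (hb : 1 ≤ b) (hC : 1 ≤ C)
    (h : ∀ᶠ n in atTop, (u n : ℝ) ≤ C * ((n : ℝ) + 2) * b ^ n) :
    ∀ᶠ n in atTop, Real.log (u n) / (n : ℝ) ≤
      (Real.log C + Real.log ((n : ℝ) + 2)) / n + Real.log b := by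
  filter_upwards [h, eventually_ge_atTop 1] with n hn hn1
  have hnR : (1:ℝ) ≤ (n:ℝ) := by exact_mod_cast hn1
  have hrhs : Real.log (u n) ≤ Real.log C + Real.log ((n : ℝ) + 2) + n * Real.log b := by
    rcases Nat.eq_zero_or_pos (u n) with h0 | h0
    · rw [h0]
      simp only [Nat.cast_zero, Real.log_zero]
      have ha : (0:ℝ) ≤ (n:ℝ) * Real.log b :=
        mul_nonneg (by linarith) (Real.log_nonneg hb)
      have hb' := Real.log_nonneg hC
      have hc' := Real.log_nonneg (show (1:ℝ) ≤ (n:ℝ) + 2 by linarith)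
      linarith
    · have hu : (0:ℝ) < (u n : ℝ) := by exact_mod_cast h0
      calc Real.log (u n) ≤ Real.log (C * ((n : ℝ) + 2) * b ^ n) := Real.log_le_log hu hn
        _ = Real.log C + Real.log ((n : ℝ) + 2) + n * Real.log b := by
            rw [Real.log_mul (by positivity) (by positivity),
              Real.log_mul (by positivity) (by positivity), Real.log_pow]
  have hnpos : (0:ℝ) < (n:ℝ) := by linarith
  rw [div_add' _ _ _ (ne_of_gt hnpos), div_le_div_iff₀ hnpos hnpos]
  nlinarith [hrhs]

lemma limsup_le_of_card_le {u : ℕ → ℕ} {b C : ℝ} (hb : 1 ≤ b) (hC : 1 ≤ C)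
    (h : ∀ᶠ n in atTop, (u n : ℝ) ≤ C * ((n : ℝ) + 2) * b ^ n) :
    limsup (fun n : ℕ => Real.log (u n) / (n : ℝ)) atTop ≤ Real.log b := by
  have hv := tendsto_aux b C
  have hle := seq_le_aux hb hC h
  calc limsup (fun n : ℕ => Real.log (u n) / (n : ℝ)) atTop
      ≤ limsup (fun n : ℕ => (Real.log C + Real.log ((n : ℝ) + 2)) / n + Real.log b) atTop := by
        refine limsup_le_limsup hle ?_ ?_
        · exact isCoboundedUnder_le_of_le atTop
            (fun n => div_nonneg (log_nat_nonneg _) (by positivity))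
        · exact hv.isBoundedUnder_le
    _ = Real.log b := hv.limsup_eq


lemma le_limsup_of_card_ge {u : ℕ → ℕ} {b C : ℝ} (hb : 1 ≤ b) (hC : 1 ≤ C)
    (hup : ∀ᶠ n in atTop, (u n : ℝ) ≤ C * ((n : ℝ) + 2) * b ^ n)
    (hlo : ∀ᶠ n in atTop, b ^ n ≤ (u n : ℝ)) :
    Real.log b ≤ limsup (fun n : ℕ => Real.log (u n) / (n : ℝ)) atTop := by
  apply le_limsup_of_frequently_le
  · apply Filter.Eventually.frequently
    filter_upwards [hlo, eventually_ge_atTop 1] with n hn hn1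
    have hnp : (0:ℝ) < n := by exact_mod_cast hn1
    have hbn : (0:ℝ) < b ^ n := by positivity
    have hl : Real.log (b ^ n) ≤ Real.log (u n) := Real.log_le_log hbn hn
    rw [Real.log_pow] at hl
    rw [le_div_iff₀ hnp]
    calc Real.log b * n = (n : ℝ) * Real.log b := by ring
      _ ≤ Real.log (u n) := hl
  · exact (tendsto_aux b C).isBoundedUnder_le.mono_le (seq_le_aux hb hC hup)

lemma limsup_card_eq {u : ℕ → ℕ} {b C : ℝ} (hb : 1 ≤ b) (hC : 1 ≤ C)
    (hup : ∀ᶠ n in atTop, (u n : ℝ) ≤ C * ((n : ℝ) + 2) * b ^ n)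
    (hlo : ∀ᶠ n in atTop, b ^ n ≤ (u n : ℝ)) :
    limsup (fun n : ℕ => Real.log (u n) / (n : ℝ)) atTop = Real.log b :=
  le_antisymm (limsup_le_of_card_le hb hC hup) (le_limsup_of_card_ge hb hC hup hlo)

lemma max0_log (u : ℕ → ℕ) :
    (fun n : ℕ => max 0 (Real.log (u n)) / (n : ℝ)) =
      fun n : ℕ => Real.log (u n) / (n : ℝ) := by
  funext n
  rw [max_eq_right (log_nat_nonneg _)]

lemma card_le_of_inj {S : Set (List Alph)} {β : Type} [Fintype β]
    (f : ↥S → β) (hf : Function.Injective f) : Nat.card ↥S ≤ Fintype.card β := by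
  have := Nat.card_le_card_of_injective f hf
  simpa [Nat.card_eq_fintype_card] using this

lemma card_ge_of_inj {S : Set (List Alph)} (hfin : S.Finite) {β : Type} [Fintype β]
    (f : β → ↥S) (hf : Function.Injective f) : Fintype.card β ≤ Nat.card ↥S := by
  haveI := hfin.to_subtype
  have := Nat.card_le_card_of_injective f hf
  simpa [Nat.card_eq_fintype_card] using this

-- ===================== X-side constructions =====================

def padL (w : List Alph) (c : Alph) : ℤ → Alph := fun j => if 0 ≤ j then L2F w j else c

lemma padL_ne_m {w : List Alph} {c : Alph} (hw : ∀ a ∈ w, a ≠ .m) (hc : c ≠ .m) (j : ℤ) :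
    padL w c j ≠ .m := by
  unfold padL; split
  · exact L2F_ne_m_of_nom hw j
  · exact hc

def XB (w : List Alph) (c : Alph) : ℤ → Alph := fun i =>
  if i < (w.length : ℤ) then padL w c i
  else if i = (w.length : ℤ) then .m
  else g (padL w c (2 * w.length - i))

lemma XB_lt {w : List Alph} {c : Alph} {i : ℤ} (h : i < (w.length : ℤ)) :
    XB w c i = padL w c i := if_pos h

lemma XB_eq (w : List Alph) (c : Alph) : XB w c (w.length : ℤ) = .m := by
  unfold XB; rw [if_neg (lt_irrefl _), if_pos rfl]

lemma XB_gt {w : List Alph} {c : Alph} {i : ℤ} (h : (w.length : ℤ) < i) :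
    XB w c i = g (padL w c (2 * w.length - i)) := by
  unfold XB; rw [if_neg (by omega), if_neg (by omega)]

lemma XB_mem (w : List Alph) (c : Alph) (hw : ∀ a ∈ w, a ≠ .m) (hc : c ≠ .m) :
    XB w c ∈ XE := by
  right
  refine ⟨w.length, XB_eq w c, fun i hi => ?_, fun k hk => ?_⟩
  · rcases lt_trichotomy i (w.length : ℤ) with h | h | h
    · rw [XB_lt h]; exact padL_ne_m hw hc i
    · exact absurd h hi
    · rw [XB_gt h]; exact g_ne_m _
  · rw [XB_gt (by omega), XB_lt (by omega)]
    congr 1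
    ring_nf

lemma XB_match (w : List Alph) (c : Alph) :
    ∀ i : ℤ, 0 ≤ i → i < w.length → XB w c i = L2F w i := by
  intro i h0 hn
  rw [XB_lt hn]
  unfold padL
  rw [if_pos h0]

lemma XB_read_mem (w : List Alph) (c : Alph) (hw : ∀ a ∈ w, a ≠ .m) (hc : c ≠ .m) :
    (fun k : ℕ => XB w c ((w.length : ℤ) - 1 + k)) ∈ fol XE w :=
  fol_iff.mpr ⟨XB w c, XB_mem w c hw hc, XB_match w c, fun _ => rfl⟩

lemma exists_c' (a : Alph) : ∃ c', c' ≠ .m ∧ g c' ≠ g a := by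
  cases a
  · exact ⟨.o, by simp, by simp [g]⟩
  · exact ⟨.z, by simp, by simp [g]⟩
  · exact ⟨.z, by simp, by simp [g]⟩
  · exact ⟨.o, by simp, by simp [g]⟩

lemma nom_constraint_X {w : List Alph} (hw0 : w ≠ []) (hw : ∀ a ∈ w, a ≠ .m) :
    IsLeftConstraint XE w := by
  have hn : 1 ≤ w.length := List.length_pos_iff.mpr hw0
  have hnt : w.tail.length = w.length - 1 := List.length_tail
  have htZ : ((w.tail.length : ℕ) : ℤ) = (w.length : ℤ) - 1 := by rw [hnt]; omega
  have hwt : ∀ a ∈ w.tail, a ≠ .m := fun a ha => hw a (List.mem_of_mem_tail ha)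
  obtain ⟨c', hc'm, hc'g⟩ := exists_c' (L2F w 0)
  set yb : ℕ → Alph := fun k => XB w.tail c' ((w.tail.length : ℤ) - 1 + k) with hyb
  have hybmem : yb ∈ fol XE w.tail := XB_read_mem w.tail c' hwt hc'm
  have hybnot : yb ∉ fol XE w := by
    intro hmem
    rw [fol_iff] at hmem
    obtain ⟨B2, hB2, hmatch, hread⟩ := hmem
    have hB2n : B2 (w.length : ℤ) = .m := by
      have h1 := hread 1
      have : yb 1 = .m := by
        rw [hyb]
        show XB w.tail c' ((w.tail.length : ℤ) - 1 + ((1:ℕ):ℤ)) = .m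
        rw [show ((w.tail.length : ℤ) - 1 + ((1:ℕ):ℤ)) = (w.tail.length : ℤ) by push_cast; ring]
        exact XB_eq w.tail c'
      have h1' := (hread 1).symm
      rw [this] at h1'
      convert h1' using 2
      push_cast; ring
    rcases hB2 with hnom | ⟨p, hp1, hp2, hp3⟩
    · exact hnom _ hB2n
    · have hpn : (w.length : ℤ) = p := by
        by_contra hne
        exact hp2 _ hne hB2n
      have hecho := hp3 (w.length : ℤ) (by omega)
      rw [← hpn] at hecho
      have h0 : B2 ((w.length : ℤ) - (w.length : ℤ)) = L2F w 0 := by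
        rw [show (w.length : ℤ) - (w.length : ℤ) = 0 by ring]
        exact hmatch 0 le_rfl (by omega)
      have h2n : B2 ((w.length : ℤ) + (w.length : ℤ)) = g c' := by
        have hr := hread (w.length + 1)
        have : yb (w.length + 1) = g c' := by
          rw [hyb]
          show XB w.tail c' ((w.tail.length : ℤ) - 1 + ((w.length + 1 : ℕ) : ℤ)) = g c'
          rw [XB_gt (by push_cast; omega)]
          have harg : 2 * (w.tail.length : ℤ) - ((w.tail.length : ℤ) - 1 + ((w.length + 1 : ℕ) : ℤ)) = -1 := by
            push_cast
            omega
          rw [harg]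
          unfold padL
          rw [if_neg (by omega)]
        have hr' := (hread (w.length + 1)).symm
        rw [this] at hr'
        convert hr' using 2
        push_cast; ring
      rw [h2n, h0] at hecho
      exact hc'g hecho
  refine ⟨hw0, ?_, ?_⟩
  · apply Set.nonempty_iff_ne_empty.mp
    exact ⟨_, XB_read_mem w Alph.z hw (by simp)⟩
  · rw [Set.ssubset_def]
    exact ⟨fol_sub_tail shift_XE w, fun h => hybnot (h hybmem)⟩


-- ===================== X-side counting =====================

def emb3 : Fin 3 → Alph := ![.z, .o, .t]

lemma emb3_ne_m (i : Fin 3) : emb3 i ≠ .m := by fin_cases i <;> simp [emb3]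

lemma emb3_inj : Function.Injective emb3 := by
  intro a b h
  fin_cases a <;> fin_cases b <;> simp_all [emb3]

def code3 : Alph → Fin 3
  | .z => 0
  | .o => 1
  | .t => 2
  | .m => 0

lemma code3_inj {a a' : Alph} (h1 : a ≠ .m) (h2 : a' ≠ .m) (h : code3 a = code3 a') :
    a = a' := by
  cases a <;> cases a' <;> simp_all [code3]

def w3 (n : ℕ) (f : Fin n → Fin 3) : List Alph := List.ofFn (fun i => emb3 (f i))

lemma w3_len (n : ℕ) (f : Fin n → Fin 3) : (w3 n f).length = n := by simp [w3]

lemma w3_nom (n : ℕ) (f : Fin n → Fin 3) : ∀ a ∈ w3 n f, a ≠ .m := by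
  intro a ha
  rw [w3, List.mem_ofFn] at ha
  obtain ⟨i, rfl⟩ := ha
  exact emb3_ne_m _

lemma w3_inj (n : ℕ) : Function.Injective (w3 n) := by
  intro f f' h
  have := List.ofFn_injective h
  funext i
  exact emb3_inj (congrFun this i)

lemma L2F_ext {w w' : List Alph} (hl : w.length = w'.length)
    (h : ∀ i : ℕ, i < w.length → L2F w i = L2F w' i) : w = w' := by
  apply List.ext_get hl
  intro i h1 h2
  rw [← L2F_eq_get w i h1, ← L2F_eq_get w' i h2]
  exact h i h1

lemma card_LC_XE_ge (n : ℕ) (hn : 1 ≤ n) : 3 ^ n ≤ Nat.card ↥(LC XE n) := by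
  have h := card_ge_of_inj (LC_finite XE n)
    (f := fun f : Fin n → Fin 3 => (⟨w3 n f, w3_len n f, nom_constraint_X
      (by intro h0; have := w3_len n f; rw [h0] at this; simp at this; omega)
      (w3_nom n f)⟩ : ↥(LC XE n)))
    (by intro f f' hff; exact w3_inj n (congrArg Subtype.val hff))
  simpa using h

lemma nom_extendable_X {w : List Alph} (hw0 : w ≠ []) (hw : ∀ a ∈ w, a ≠ .m) :
    IsExtendable XE w := by
  have hn : 1 ≤ w.length := List.length_pos_iff.mpr hw0
  refine ⟨nom_constraint_X hw0 hw, fun j => if h : j < w.length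
    then w.get ⟨w.length - 1 - j, by omega⟩ else .z, ?_, ?_⟩
  · apply List.ext_get (by simp [wordOf]; omega)
    intro i h1 h2
    have hi : i < w.length := by simpa using h2
    have hlw : (wordOf (fun j => if h : j < w.length
        then w.get ⟨w.length - 1 - j, by omega⟩ else .z) (w.length - 1)).length
        = w.length := by simp [wordOf]; omega
    simp only [wordOf, List.get_eq_getElem, List.getElem_map, List.getElem_range]
    have hr : w.length - 1 - i < w.length := by omega
    rw [dif_pos hr]
    congr 1
    omega
  · intro N
    refine ⟨N, le_rfl, ?_⟩
    have hlen : (wordOf (fun j => if h : j < w.length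
        then w.get ⟨w.length - 1 - j, by omega⟩ else .z) N).length = N + 1 := by
      simp [wordOf]
    apply nom_constraint_X
    · intro h0; rw [h0] at hlen; simp at hlen
    · intro a ha
      rw [wordOf, List.mem_map] at ha
      obtain ⟨j, _, rfl⟩ := ha
      split
      · exact hw _ (List.get_mem _ _)
      · simp

lemma card_ELC_XE_ge (n : ℕ) (hn : 1 ≤ n) : 3 ^ n ≤ Nat.card ↥(ELC XE n) := by
  have h := card_ge_of_inj (finite_of_len _ n (fun _ hw => hw.1))
    (f := fun f : Fin n → Fin 3 => (⟨w3 n f, w3_len n f, nom_extendable_X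
      (by intro h0; have := w3_len n f; rw [h0] at this; simp at this; omega)
      (w3_nom n f)⟩ : ↥(ELC XE n)))
    (by intro f f' hff; exact w3_inj n (congrArg Subtype.val hff))
  simpa using h

lemma Lang_unique_m {w : List Alph} {n : ℕ} (hw : w ∈ Lang XE n) :
    ∀ i j : ℕ, i < n → j < n → L2F w i = .m → L2F w j = .m → i = j := by
  obtain ⟨hlen, x, hx, hocc⟩ := hw
  have hval : ∀ i : ℕ, i < n → x i = L2F w i := by
    intro i hi
    have := hocc ⟨i, by omega⟩
    rw [L2F_eq_get w i (by omega)]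
    simpa using this
  intro i j hi hj hmi hmj
  have hxi : x i = .m := by rw [hval i hi, hmi]
  have hxj : x j = .m := by rw [hval j hj, hmj]
  rcases hx with hnom | ⟨p, hp1, hp2, _⟩
  · exact absurd hxi (hnom _)
  · have h1 : (i : ℤ) = p := by by_contra hne; exact hp2 _ hne hxi
    have h2 : (j : ℤ) = p := by by_contra hne; exact hp2 _ hne hxj
    omega

lemma card_Lang_XE_le (n : ℕ) :
    Nat.card ↥(Lang XE n) ≤ (n + 1) * 3 ^ n := by
  classical
  have h := card_le_of_inj (S := Lang XE n)
    (f := fun w => ((if h : ∃ i : Fin n, L2F w.1 i = .m then some h.choose else none),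
      fun i : Fin n => code3 (L2F w.1 i)))
    ?_
  · calc Nat.card ↥(Lang XE n) ≤ Fintype.card (Option (Fin n) × (Fin n → Fin 3)) := h
      _ = (n + 1) * 3 ^ n := by simp
  · rintro ⟨w, hw⟩ ⟨w', hw'⟩ hee
    simp only [Prod.mk.injEq, Subtype.mk.injEq] at hee ⊢
    obtain ⟨hopt, htrit⟩ := hee
    have hlen : w.length = w'.length := by rw [hw.1, hw'.1]
    apply L2F_ext hlen
    intro i hi
    have hin : i < n := by rw [← hw.1]; exact hi
    have htr := congrFun htrit ⟨i, hin⟩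
    simp only at htr
    by_cases hm : ∃ i : Fin n, L2F w i = .m
    · rw [dif_pos hm] at hopt
      by_cases hm' : ∃ i : Fin n, L2F w' i = .m
      · rw [dif_pos hm'] at hopt
        have hcc : hm.choose = hm'.choose := by simpa using hopt
        by_cases hii : (i : ℕ) = (hm.choose : ℕ)
        · have e1 : L2F w i = .m := by
            have := hm.choose_spec
            rw [show ((i:ℕ):ℤ) = ((hm.choose : ℕ) : ℤ) by omega]
            exact this
          have e2 : L2F w' i = .m := by
            have := hm'.choose_spec
            rw [show ((i:ℕ):ℤ) = ((hm'.choose : ℕ) : ℤ) by rw [← hcc]; omega]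
            exact this
          rw [e1, e2]
        · have e1 : L2F w i ≠ .m := by
            intro hmm
            have := Lang_unique_m hw i hm.choose hin hm.choose.isLt hmm hm.choose_spec
            exact hii this
          have e2 : L2F w' i ≠ .m := by
            intro hmm
            have := Lang_unique_m hw' i hm'.choose hin hm'.choose.isLt hmm hm'.choose_spec
            rw [← hcc] at this
            exact hii this
          exact code3_inj e1 e2 htr
      · rw [dif_neg hm'] at hopt
        simp at hopt
    · rw [dif_neg hm] at hopt
      by_cases hm' : ∃ i : Fin n, L2F w' i = .m
      · rw [dif_pos hm'] at hopt
        simp at hopt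
      · push_neg at hm hm'
        exact code3_inj (hm ⟨i, hin⟩) (hm' ⟨i, hin⟩) htr


-- ===================== Y-side structure =====================

lemma translate_mem_YE (c : ℤ) {x : ℤ → Alph} (hx : x ∈ YE) :
    (fun n => x (n + c)) ∈ YE := by
  rcases hx with h | ⟨p, h1, h2, h3⟩
  · exact Or.inl fun i => h (i + c)
  · refine Or.inr ⟨p - c, by simpa using h1, fun i hi => h2 _ (by omega), fun k hk => ?_⟩
    have := h3 k hk
    beta_reduce
    rw [show p - c - k + c = p - k by ring, show p - c + k + c = p + k by ring]
    exact this

lemma shift_YE : shift '' YE = YE := by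
  apply Set.Subset.antisymm
  · rintro _ ⟨x, hx, rfl⟩
    exact translate_mem_YE 1 hx
  · intro x hx
    refine ⟨fun n => x (n + (-1)), translate_mem_YE (-1) hx, ?_⟩
    funext n
    simp [shift]

lemma Y_unique {B : ℤ → Alph} (hB : B ∈ YE) {i j : ℤ} (hi : B i = .m) (hj : B j = .m) :
    i = j := by
  rcases hB with h | ⟨p, h1, h2, h3⟩
  · exact absurd hi (h i)
  · have hip : i = p := by by_contra h'; exact h2 i h' hi
    have hjp : j = p := by by_contra h'; exact h2 j h' hj
    rw [hip, hjp]

lemma Y_echo {B : ℤ → Alph} (hB : B ∈ YE) {q : ℤ} (hq : B q = .m) :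
    ∀ k : ℤ, 0 < k → B (q - k) = g (B (q + k)) := by
  rcases hB with h | ⟨p, h1, h2, h3⟩
  · exact absurd hq (h q)
  · have hqp : q = p := by by_contra h'; exact h2 q h' hq
    rw [hqp]
    exact h3

lemma L2F_tail {w : List Alph} (hw0 : w ≠ []) (i : ℤ) (h0 : 0 ≤ i) :
    L2F w.tail i = L2F w (i + 1) := by
  cases' w with a w'
  · exact absurd rfl hw0
  · rw [List.tail_cons, L2F_cons a w' i h0]

-- the "free" follower set
def folFree (w : List Alph) : Set (ℕ → Alph) :=
  {y | y 0 = L2F w ((w.length : ℤ) - 1) ∧ ∀ d, y d ≠ .m}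

lemma folY_nom_t {w : List Alph} (hw : ∀ a ∈ w, a ≠ .m) {j : ℤ} (h0 : 0 ≤ j)
    (hj : j < w.length) (hjt : L2F w j = .t) {y : ℕ → Alph} (hy : y ∈ fol YE w) :
    ∀ d, y d ≠ .m := by
  rw [fol_iff] at hy
  obtain ⟨B, hB, hm, hr⟩ := hy
  have hn : 1 ≤ w.length := by omega
  intro d hd
  rcases Nat.eq_zero_or_pos d with rfl | hdpos
  · have := hr 0
    rw [hd] at this
    have h1 : B ((w.length : ℤ) - 1 + ((0:ℕ):ℤ)) = L2F w ((w.length : ℤ) - 1) := by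
      rw [show ((w.length : ℤ) - 1 + ((0:ℕ):ℤ)) = (w.length:ℤ) - 1 by push_cast; ring]
      exact hm _ (by omega) (by omega)
    rw [h1] at this
    exact L2F_ne_m_of_nom hw _ this.symm
  · have hq : B ((w.length : ℤ) - 1 + d) = .m := by rw [← hr d]; exact hd
    have hBj : B j = .t := by rw [hm j h0 hj, hjt]
    have hk : (0:ℤ) < ((w.length : ℤ) - 1 + d) - j := by omega
    have hech := Y_echo hB hq _ hk
    rw [show ((w.length : ℤ) - 1 + d) - (((w.length : ℤ) - 1 + d) - j) = j by ring] at hech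
    rw [hBj] at hech
    exact g_ne_t _ hech.symm

lemma folY_nom_sup {w : List Alph} (hw0 : w ≠ []) (hw : ∀ a ∈ w, a ≠ .m)
    {y : ℕ → Alph} (hy : y ∈ folFree w) : y ∈ fol YE w := by
  obtain ⟨hy0, hym⟩ := hy
  have hn : 1 ≤ w.length := List.length_pos_iff.mpr hw0
  rw [fol_iff]
  refine ⟨fun i => if i < (w.length : ℤ) - 1 then (if 0 ≤ i then L2F w i else .z)
    else y (i - ((w.length : ℤ) - 1)).toNat, ?_, ?_, ?_⟩
  · left
    intro i
    dsimp only
    split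
    · split
      · exact L2F_ne_m_of_nom hw i
      · simp
    · exact hym _
  · intro i h0 hn'
    dsimp only
    rcases lt_or_ge i ((w.length : ℤ) - 1) with h | h
    · rw [if_pos h, if_pos h0]
    · rw [if_neg (by omega), show (i - ((w.length : ℤ) - 1)).toNat = 0 by omega, hy0,
        show i = (w.length : ℤ) - 1 by omega]
  · intro k
    dsimp only
    rw [if_neg (by omega)]
    congr 1
    omega

lemma folY_nom_t_eq {w : List Alph} (hw0 : w ≠ []) (hw : ∀ a ∈ w, a ≠ .m) {j : ℤ}
    (h0 : 0 ≤ j) (hj : j < w.length) (hjt : L2F w j = .t) :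
    fol YE w = folFree w := by
  ext y
  constructor
  · intro hy
    exact ⟨fol_last hw0 hy, folY_nom_t hw h0 hj hjt hy⟩
  · exact folY_nom_sup hw0 hw

lemma Y_adm {w : List Alph} {a : ℤ} (h0 : 0 ≤ a) (ha : a < w.length)
    (ham : L2F w a = .m) (hne : (fol YE w).Nonempty) :
    (∀ i : ℤ, 0 ≤ i → i < w.length → i ≠ a → L2F w i ≠ .m) ∧
    (∀ i : ℤ, 0 ≤ i → i < a → L2F w i ≠ .m ∧ L2F w i ≠ .t) ∧
    (∀ k : ℤ, 0 < k → k ≤ a → a + k < w.length → L2F w (a - k) = g (L2F w (a + k))) := by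
  obtain ⟨y, hy⟩ := hne
  rw [fol_iff] at hy
  obtain ⟨B, hB, hm, _⟩ := hy
  have hBa : B a = .m := by rw [hm a h0 ha, ham]
  refine ⟨fun i hi0 hin hia hmm => ?_, fun i hi0 hia => ?_, fun k hk0 hka hkn => ?_⟩
  · have : B i = .m := by rw [hm i hi0 hin, hmm]
    exact hia (Y_unique hB this hBa)
  · have hech := Y_echo hB hBa (a - i) (by omega)
    rw [show a - (a - i) = i by ring] at hech
    have : L2F w i = g (B (a + (a - i))) := by rw [← hm i hi0 (by omega)]; exact hech
    rw [this]
    exact ⟨g_ne_m _, g_ne_t _⟩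
  · have hech := Y_echo hB hBa k hk0
    rw [hm _ (by omega) (by omega), hm _ (by omega) hkn] at hech
    exact hech

lemma folY_m_eq {w : List Alph} {a : ℤ} (h0 : 0 ≤ a) (ha : a < w.length)
    (ham : L2F w a = .m) (h2a : 2 * a + 1 < w.length) (hne : (fol YE w).Nonempty) :
    fol YE w = folFree w := by
  have hn : 1 ≤ w.length := by omega
  have hw0 : w ≠ [] := by intro h; rw [h] at hn; simp at hn
  obtain ⟨huniq, hleft, hecho⟩ := Y_adm h0 ha ham hne
  ext y
  constructor
  · intro hy
    refine ⟨fol_last hw0 hy, ?_⟩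
    rw [fol_iff] at hy
    obtain ⟨B, hB, hm, hr⟩ := hy
    have hBa : B a = .m := by rw [hm a h0 ha, ham]
    intro d hd
    have hq : B ((w.length : ℤ) - 1 + d) = .m := by rw [← hr d]; exact hd
    have := Y_unique hB hq hBa
    omega
  · rintro ⟨hy0, hym⟩
    rw [fol_iff]
    set R : ℤ → Alph := fun i => if i < (w.length : ℤ) then (if 0 ≤ i then L2F w i else .z)
      else y (i - ((w.length : ℤ) - 1)).toNat with hR
    have hRval : ∀ i : ℤ, 0 ≤ i → i < w.length → R i = L2F w i := by
      intro i h1 h2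
      rw [hR]
      dsimp only
      rw [if_pos h2, if_pos h1]
    have hRy : ∀ i : ℤ, (w.length : ℤ) ≤ i → R i = y (i - ((w.length : ℤ) - 1)).toNat := by
      intro i h1
      rw [hR]
      dsimp only
      rw [if_neg (by omega)]
    have hRnm : ∀ i : ℤ, 0 ≤ i → i ≠ a → R i ≠ .m := by
      intro i h1 h2
      rcases lt_or_ge i (w.length : ℤ) with h | h
      · rw [hRval i h1 h]
        exact huniq i h1 h h2
      · rw [hRy i h]
        exact hym _
    refine ⟨fun i => if i < 0 then g (R (2 * a - i)) else R i, ?_, ?_, ?_⟩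
    · right
      refine ⟨a, ?_, ?_, ?_⟩
      · dsimp only
        rw [if_neg (by omega), hRval a h0 ha, ham]
      · intro i hi
        dsimp only
        rcases lt_or_ge i 0 with h | h
        · rw [if_pos h]; exact g_ne_m _
        · rw [if_neg (by omega)]; exact hRnm i h hi
      · intro k hk
        dsimp only
        have hak : ¬ (a + k < 0) := by omega
        rw [if_neg hak]
        rcases lt_or_ge (a - k) 0 with h | h
        · rw [if_pos h]
          congr 2
          ring
        · rw [if_neg (by omega), hRval _ h (by omega), hRval _ (by omega) (by omega),
            hecho k hk (by omega) (by omega)]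
    · intro i h1 h2
      dsimp only
      rw [if_neg (by omega)]
      exact hRval i h1 h2
    · intro k
      dsimp only
      rw [if_neg (by omega)]
      rcases Nat.eq_zero_or_pos k with rfl | hk
      · rw [show (w.length : ℤ) - 1 + ((0:ℕ):ℤ) = (w.length : ℤ) - 1 by push_cast; ring,
          hRval _ (by omega) (by omega), hy0]
      · rw [hRy _ (by omega)]
        congr 1
        omega


lemma nom_of_L2F {v : List Alph} (h : ∀ i : ℤ, 0 ≤ i → i < v.length → L2F v i ≠ .m) :
    ∀ b ∈ v, b ≠ .m := by
  intro b hb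
  rw [List.mem_iff_get] at hb
  obtain ⟨i, rfl⟩ := hb
  have hh := h i (by positivity) (by exact_mod_cast i.isLt)
  rwa [L2F_eq_get v i i.isLt] at hh

lemma folFree_tail {w : List Alph} (hw0 : w ≠ []) (hn : 2 ≤ w.length) :
    folFree w.tail = folFree w := by
  have htl : w.tail.length = w.length - 1 := List.length_tail
  have hlast : L2F w.tail ((w.tail.length : ℤ) - 1) = L2F w ((w.length : ℤ) - 1) := by
    rw [L2F_tail hw0 _ (by omega)]
    congr 1
    omega
  unfold folFree
  rw [hlast]

lemma tail_ne_nil {w : List Alph} (hn : 2 ≤ w.length) : w.tail ≠ [] := by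
  have htl : w.tail.length = w.length - 1 := List.length_tail
  intro h
  rw [h] at htl
  simp at htl
  omega

lemma not_constraint_nom_t {w : List Alph} (hn : 2 ≤ w.length) (hw : ∀ a ∈ w, a ≠ .m)
    {j : ℤ} (hj1 : 1 ≤ j) (hj : j < w.length) (hjt : L2F w j = .t) :
    ¬ IsLeftConstraint YE w := by
  rintro ⟨hne, hfne, hss⟩
  have hw0 : w ≠ [] := hne
  have htl : w.tail.length = w.length - 1 := List.length_tail
  have hwt : ∀ a ∈ w.tail, a ≠ .m := fun a ha => hw a (List.mem_of_mem_tail ha)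
  have e1 : fol YE w = folFree w := folY_nom_t_eq hw0 hw (by omega) hj hjt
  have e2 : fol YE w.tail = folFree w.tail := by
    apply folY_nom_t_eq (tail_ne_nil hn) hwt (j := j - 1) (by omega) (by omega)
    rw [L2F_tail hw0 _ (by omega), show j - 1 + 1 = j by ring]
    exact hjt
  rw [e1, e2, folFree_tail hw0 hn] at hss
  exact ssubset_irrefl _ hss

lemma not_constraint_m_pos {w : List Alph} {a : ℤ} (h1 : 1 ≤ a) (ha : a < w.length)
    (ham : L2F w a = .m) (h2a : 2 * a + 1 < w.length) :
    ¬ IsLeftConstraint YE w := by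
  rintro ⟨hne, hfne, hss⟩
  have hn : 2 ≤ w.length := by omega
  have hnon : (fol YE w).Nonempty := Set.nonempty_iff_ne_empty.mpr hfne
  have hw0 : w ≠ [] := hne
  have htl : w.tail.length = w.length - 1 := List.length_tail
  have hsub : fol YE w ⊆ fol YE w.tail := fol_sub_tail shift_YE w
  have hnon' : (fol YE w.tail).Nonempty := hnon.mono hsub
  have e1 := folY_m_eq (by omega : (0:ℤ) ≤ a) ha ham h2a hnon
  have e2 : fol YE w.tail = folFree w.tail := by
    apply folY_m_eq (a := a - 1) (by omega) (by omega) ?_ (by omega) hnon'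
    rw [L2F_tail hw0 _ (by omega), show a - 1 + 1 = a by ring]
    exact ham
  rw [e1, e2, folFree_tail hw0 hn] at hss
  exact ssubset_irrefl _ hss

lemma not_constraint_m_zero_t {w : List Alph} (ham : L2F w 0 = .m) {j : ℤ} (hj1 : 1 ≤ j)
    (hj : j < w.length) (hjt : L2F w j = .t) (hn : 2 ≤ w.length) :
    ¬ IsLeftConstraint YE w := by
  rintro ⟨hne, hfne, hss⟩
  have hnon : (fol YE w).Nonempty := Set.nonempty_iff_ne_empty.mpr hfne
  have hw0 : w ≠ [] := hne
  have htl : w.tail.length = w.length - 1 := List.length_tail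
  have e1 := folY_m_eq (a := 0) le_rfl (by omega) ham (by omega) hnon
  obtain ⟨huniq, -, -⟩ := Y_adm (a := 0) le_rfl (by omega) ham hnon
  have hwt : ∀ b ∈ w.tail, b ≠ .m := by
    apply nom_of_L2F
    intro i hi0 hin
    rw [L2F_tail hw0 _ hi0]
    exact huniq (i + 1) (by omega) (by omega) (by omega)
  have e2 : fol YE w.tail = folFree w.tail := by
    apply folY_nom_t_eq (tail_ne_nil hn) hwt (j := j - 1) (by omega) (by omega)
    rw [L2F_tail hw0 _ (by omega), show j - 1 + 1 = j by ring]
    exact hjt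
  rw [e1, e2, folFree_tail hw0 hn] at hss
  exact ssubset_irrefl _ hss

lemma alph2 (x : Alph) (h1 : x ≠ .m) (h2 : x ≠ .t) : x = .z ∨ x = .o := by
  cases x <;> simp_all

lemma LC_Y_struct {w : List Alph} (hc : IsLeftConstraint YE w) (hn : 2 ≤ w.length) :
    ((∀ i : ℤ, 0 ≤ i → i < w.length → L2F w i ≠ .m) ∧
      (∀ i : ℤ, 1 ≤ i → i < w.length → L2F w i = .z ∨ L2F w i = .o)) ∨
    (L2F w 0 = .m ∧ ∀ i : ℤ, 1 ≤ i → i < w.length → L2F w i = .z ∨ L2F w i = .o) ∨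
    (∃ a : ℤ, 1 ≤ a ∧ a < w.length ∧ L2F w a = .m ∧ (w.length : ℤ) ≤ 2 * a + 1 ∧
      (∀ i : ℤ, 0 ≤ i → i < a → L2F w i = .z ∨ L2F w i = .o) ∧
      (∀ i : ℤ, 0 ≤ i → i < w.length → i ≠ a → L2F w i ≠ .m) ∧
      (∀ k : ℤ, 0 < k → a + k < w.length → L2F w (a - k) = g (L2F w (a + k)))) := by
  have hnon : (fol YE w).Nonempty := Set.nonempty_iff_ne_empty.mpr hc.2.1
  by_cases hm : ∃ a : ℤ, 0 ≤ a ∧ a < w.length ∧ L2F w a = .m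
  · obtain ⟨a, ha0, han, ham⟩ := hm
    obtain ⟨huniq, hleft, hecho⟩ := Y_adm ha0 han ham hnon
    rcases eq_or_lt_of_le ha0 with hz | hpos
    · right; left
      rw [← hz] at ham
      refine ⟨ham, fun i hi1 hin => ?_⟩
      refine alph2 _ (huniq i (by omega) hin (by omega)) ?_
      intro ht
      exact not_constraint_m_zero_t ham hi1 hin ht hn hc
    · right; right
      have hbig : (w.length : ℤ) ≤ 2 * a + 1 := by
        by_contra hlt
        exact not_constraint_m_pos (by omega) han ham (by omega) hc
      refine ⟨a, by omega, han, ham, hbig,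
        fun i h1 h2 => alph2 _ (hleft i h1 h2).1 (hleft i h1 h2).2, huniq,
        fun k hk0 hkn => hecho k hk0 (by omega) hkn⟩
  · push_neg at hm
    left
    have hnm : ∀ i : ℤ, 0 ≤ i → i < w.length → L2F w i ≠ .m := fun i h1 h2 => hm i h1 h2
    refine ⟨hnm, fun i h1 h2 => ?_⟩
    refine alph2 _ (hnm i (by omega) h2) ?_
    intro ht
    exact not_constraint_nom_t hn (nom_of_L2F hnm) h1 h2 ht hc


lemma beq_o_inj {x x' : Alph} (hx : x = .z ∨ x = .o) (hx' : x' = .z ∨ x' = .o)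
    (h : (x == .o) = (x' == .o)) : x = x' := by
  rcases hx with rfl | rfl <;> rcases hx' with rfl | rfl <;> simp_all

lemma beq_t_iff {x x' : Alph} (h : (x == .t) = (x' == .t)) : x = .t ↔ x' = .t := by
  cases x <;> cases x' <;> simp_all

lemma zo_ne_m {x : Alph} (h : x = .z ∨ x = .o) : x ≠ .m := by
  rcases h with rfl | rfl <;> simp

lemma card_LC_YE_le (n : ℕ) (hn : 2 ≤ n) :
    Nat.card ↥(LC YE n) ≤ 3 * ((n + 2) * 2 ^ n) := by
  classical
  have h := card_le_of_inj (S := LC YE n) (f := fun w =>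
    ((if h : ∃ a : ℤ, 1 ≤ a ∧ a < n ∧ L2F w.1 a = .m then
        (⟨h.choose.toNat, by have := h.choose_spec; omega⟩ : Fin (n + 2))
      else if L2F w.1 0 = .m then (⟨n, by omega⟩ : Fin (n + 2))
      else (⟨n + 1, by omega⟩ : Fin (n + 2)),
     code3 (L2F w.1 0),
     fun i : Fin n => if h : ∃ a : ℤ, 1 ≤ a ∧ a < n ∧ L2F w.1 a = .m then
        (if ((i : ℕ) : ℤ) < h.choose then L2F w.1 ((i : ℕ) : ℤ) == .o
         else L2F w.1 ((i : ℕ) : ℤ) == .t)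
      else L2F w.1 ((i : ℕ) : ℤ) == .o) :
      Fin (n + 2) × Fin 3 × (Fin n → Bool))) ?_
  · calc Nat.card ↥(LC YE n) ≤ Fintype.card (Fin (n + 2) × Fin 3 × (Fin n → Bool)) := h
      _ = 3 * ((n + 2) * 2 ^ n) := by
          simp [Fintype.card_fun]
          ring
  · rintro ⟨w, hwlen, hwc⟩ ⟨w', hwlen', hwc'⟩ hee
    simp only [Prod.mk.injEq, Subtype.mk.injEq] at hee ⊢
    obtain ⟨htag, hc0, hbits⟩ := hee
    have hs := LC_Y_struct hwc (by omega)
    have hs' := LC_Y_struct hwc' (by omega)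
    rw [hwlen] at hs
    rw [hwlen'] at hs'
    have hbit : ∀ i : ℤ, 0 ≤ i → i < n →
        ((if h : ∃ a : ℤ, 1 ≤ a ∧ a < n ∧ L2F w a = .m then
          (if i < h.choose then L2F w i == .o else L2F w i == .t)
         else L2F w i == .o) =
        (if h : ∃ a : ℤ, 1 ≤ a ∧ a < n ∧ L2F w' a = .m then
          (if i < h.choose then L2F w' i == .o else L2F w' i == .t)
         else L2F w' i == .o)) := by
      intro i h0 hilt
      have hb := congrFun hbits (⟨i.toNat, by omega⟩ : Fin n)
      simp only at hb
      rw [show (((⟨i.toNat, by omega⟩ : Fin n) : ℕ) : ℤ) = i by simp; omega] at hb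
      exact hb
    apply Subtype.ext
    show w = w'
    apply L2F_ext (by omega)
    intro iN hiN
    set i : ℤ := (iN : ℤ) with hidef
    have h0 : 0 ≤ i := by positivity
    have hilt : i < n := by omega
    have hb := hbit i h0 hilt
    by_cases hPw : ∃ a : ℤ, 1 ≤ a ∧ a < n ∧ L2F w a = .m
    · -- m at a positive position
      have hPw' : ∃ a : ℤ, 1 ≤ a ∧ a < n ∧ L2F w' a = .m := by
        by_contra h'
        rw [dif_pos hPw, dif_neg h'] at htag
        have hlt : hPw.choose.toNat < n := by have := hPw.choose_spec; omega
        by_cases hm0' : L2F w' 0 = .m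
        · rw [if_pos hm0'] at htag
          have hval : hPw.choose.toNat = n := congrArg Fin.val htag
          omega
        · rw [if_neg hm0'] at htag
          have hval : hPw.choose.toNat = n + 1 := congrArg Fin.val htag
          omega
      rw [dif_pos hPw, dif_pos hPw'] at htag
      have haa : hPw.choose = hPw'.choose := by
        have hval : hPw.choose.toNat = hPw'.choose.toNat := congrArg Fin.val htag
        have := hPw.choose_spec
        have := hPw'.choose_spec
        omega
      obtain ⟨ha1, han, ham⟩ := hPw.choose_spec
      have hspec' := hPw'.choose_spec
      rw [← haa] at hspec'
      obtain ⟨-, -, ham'⟩ := hspec'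
      set a := hPw.choose with hadef
      rw [dif_pos hPw, dif_pos hPw', ← haa] at hb
      -- extract C3 structure for both
      have hC3 : ∃ a₃ : ℤ, 1 ≤ a₃ ∧ a₃ < n ∧ L2F w a₃ = .m ∧ (n : ℤ) ≤ 2 * a₃ + 1 ∧
          (∀ i : ℤ, 0 ≤ i → i < a₃ → L2F w i = .z ∨ L2F w i = .o) ∧
          (∀ i : ℤ, 0 ≤ i → i < n → i ≠ a₃ → L2F w i ≠ .m) ∧
          (∀ k : ℤ, 0 < k → a₃ + k < n → L2F w (a₃ - k) = g (L2F w (a₃ + k))) := by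
        rcases hs with ⟨hnm, -⟩ | ⟨-, hzo⟩ | h3
        · exact absurd ham (hnm a (by omega) han)
        · exact absurd ham (zo_ne_m (hzo a ha1 han))
        · exact h3
      have hC3' : ∃ a₃ : ℤ, 1 ≤ a₃ ∧ a₃ < n ∧ L2F w' a₃ = .m ∧ (n : ℤ) ≤ 2 * a₃ + 1 ∧
          (∀ i : ℤ, 0 ≤ i → i < a₃ → L2F w' i = .z ∨ L2F w' i = .o) ∧
          (∀ i : ℤ, 0 ≤ i → i < n → i ≠ a₃ → L2F w' i ≠ .m) ∧
          (∀ k : ℤ, 0 < k → a₃ + k < n → L2F w' (a₃ - k) = g (L2F w' (a₃ + k))) := by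
        rcases hs' with ⟨hnm, -⟩ | ⟨-, hzo⟩ | h3
        · exact absurd ham' (hnm a (by omega) han)
        · exact absurd ham' (zo_ne_m (hzo a ha1 han))
        · exact h3
      obtain ⟨a₃, h31, h3n, h3m, h3big, h3left, h3uniq, h3echo⟩ := hC3
      obtain ⟨a₃', h31', h3n', h3m', h3big', h3left', h3uniq', h3echo'⟩ := hC3'
      have ha3 : a₃ = a := by
        by_contra hne
        exact h3uniq a (by omega) han (fun hh => hne hh.symm) ham
      have ha3' : a₃' = a := by
        by_contra hne
        exact h3uniq' a (by omega) han (fun hh => hne hh.symm) ham'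
      rw [ha3] at h3big h3left h3uniq h3echo
      rw [ha3'] at h3big' h3left' h3uniq' h3echo'
      -- low positions are determined by bits
      have hlow : ∀ j : ℤ, 0 ≤ j → j < a → L2F w j = L2F w' j := by
        intro j hj0 hja
        have hbj := hbit j hj0 (by omega)
        rw [dif_pos hPw, dif_pos hPw', ← haa, if_pos hja, if_pos hja] at hbj
        exact beq_o_inj (h3left j hj0 hja) (h3left' j hj0 hja) hbj
      rcases lt_trichotomy i a with hia | hia | hia
      · exact hlow i h0 hia
      · rw [hia, ham, ham']
      · -- i > a : echo positions
        rw [if_neg (by omega), if_neg (by omega)] at hb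
        by_cases hit : L2F w i = .t
        · rw [hit, (beq_t_iff hb).mp hit]
        · have hit' : L2F w' i ≠ .t := fun hh => hit ((beq_t_iff hb).mpr hh)
          have hzo : L2F w i = .z ∨ L2F w i = .o :=
            alph2 _ (h3uniq i h0 hilt (by omega)) hit
          have hzo' : L2F w' i = .z ∨ L2F w' i = .o :=
            alph2 _ (h3uniq' i h0 hilt (by omega)) hit'
          have hech := h3echo (i - a) (by omega) (by omega)
          have hech' := h3echo' (i - a) (by omega) (by omega)
          rw [show a + (i - a) = i by ring] at hech hech'
          have hfix : g (L2F w i) = L2F w i := by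
            rcases hzo with hh | hh <;> rw [hh] <;> rfl
          have hfix' : g (L2F w' i) = L2F w' i := by
            rcases hzo' with hh | hh <;> rw [hh] <;> rfl
          have hlo := hlow (a - (i - a)) (by omega) (by omega)
          rw [hech, hech', hfix, hfix'] at hlo
          exact hlo
    · -- no m at positive positions in w
      have hPw' : ¬ ∃ a : ℤ, 1 ≤ a ∧ a < n ∧ L2F w' a = .m := by
        intro h'
        rw [dif_neg hPw, dif_pos h'] at htag
        have hlt : h'.choose.toNat < n := by have := h'.choose_spec; omega
        by_cases hm0 : L2F w 0 = .m
        · rw [if_pos hm0] at htag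
          have hval : n = h'.choose.toNat := congrArg Fin.val htag
          omega
        · rw [if_neg hm0] at htag
          have hval : n + 1 = h'.choose.toNat := congrArg Fin.val htag
          omega
      push_neg at hPw hPw'
      rw [dif_neg (by push_neg; exact hPw), dif_neg (by push_neg; exact hPw')] at hb htag
      have hzo : ∀ j : ℤ, 1 ≤ j → j < n → (L2F w j = .z ∨ L2F w j = .o) := by
        intro j h1 h2
        rcases hs with ⟨-, hzo⟩ | ⟨-, hzo⟩ | ⟨a₃, h31, h3n, h3m, -⟩
        · exact hzo j h1 h2
        · exact hzo j h1 h2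
        · exact absurd h3m (by have := hPw a₃ h31 h3n; exact this)
      have hzo' : ∀ j : ℤ, 1 ≤ j → j < n → (L2F w' j = .z ∨ L2F w' j = .o) := by
        intro j h1 h2
        rcases hs' with ⟨-, hzo⟩ | ⟨-, hzo⟩ | ⟨a₃, h31, h3n, h3m, -⟩
        · exact hzo j h1 h2
        · exact hzo j h1 h2
        · exact absurd h3m (by have := hPw' a₃ h31 h3n; exact this)
      rcases Nat.eq_zero_or_pos iN with hi0 | hipos
      · -- position 0 : via the tag (m-or-not) and code3
        rw [hidef, hi0]
        simp only [Nat.cast_zero]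
        by_cases hm0 : L2F w 0 = .m
        · by_cases hm0' : L2F w' 0 = .m
          · rw [hm0, hm0']
          · rw [if_pos hm0, if_neg hm0'] at htag
            have hval : n = n + 1 := congrArg Fin.val htag
            omega
        · by_cases hm0' : L2F w' 0 = .m
          · rw [if_neg hm0, if_pos hm0'] at htag
            have hval : n + 1 = n := congrArg Fin.val htag
            omega
          · exact code3_inj hm0 hm0' hc0
      · exact beq_o_inj (hzo i (by omega) hilt) (hzo' i (by omega) hilt) hb


-- ===================== entropy values =====================

lemma card_LC_XE_le (n : ℕ) : Nat.card ↥(LC XE n) ≤ (n + 1) * 3 ^ n :=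
  le_trans (Nat.card_mono (Lang_finite XE n) (LC_subset_Lang XE n)) (card_Lang_XE_le n)

lemma card_ELC_XE_le (n : ℕ) : Nat.card ↥(ELC XE n) ≤ (n + 1) * 3 ^ n :=
  le_trans (Nat.card_mono (LC_finite XE n) (ELC_subset_LC XE n)) (card_LC_XE_le n)

lemma up_bound_XE (u : ℕ → ℕ) (hu : ∀ n, u n ≤ (n + 1) * 3 ^ n) :
    ∀ᶠ n in atTop, (u n : ℝ) ≤ 1 * ((n : ℝ) + 2) * 3 ^ n := by
  filter_upwards with n
  rw [one_mul]
  calc (u n : ℝ) ≤ (((n + 1) * 3 ^ n : ℕ) : ℝ) := by exact_mod_cast hu n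
    _ ≤ ((n : ℝ) + 2) * 3 ^ n := by
        push_cast
        have h3 : (0:ℝ) ≤ (3:ℝ) ^ n := by positivity
        nlinarith

lemma lo_bound_XE (u : ℕ → ℕ) (hu : ∀ n, 1 ≤ n → 3 ^ n ≤ u n) :
    ∀ᶠ n in atTop, (3 : ℝ) ^ n ≤ (u n : ℝ) := by
  filter_upwards [eventually_ge_atTop 1] with n hn
  exact_mod_cast hu n hn

lemma hTop_XE : hTop XE = Real.log 3 := by
  apply limsup_card_eq (by norm_num) (le_refl (1:ℝ))
  · exact up_bound_XE _ card_Lang_XE_le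
  · apply lo_bound_XE
    intro n hn
    exact le_trans (card_LC_XE_ge n hn) (Nat.card_mono (Lang_finite XE n) (LC_subset_Lang XE n))

lemma hC_XE : hC XE = Real.log 3 := by
  unfold hC
  rw [max0_log]
  apply limsup_card_eq (by norm_num) (le_refl (1:ℝ))
  · exact up_bound_XE _ card_LC_XE_le
  · exact lo_bound_XE _ card_LC_XE_ge

lemma hCstar_XE : hCstar XE = Real.log 3 := by
  unfold hCstar
  apply limsup_card_eq (by norm_num) (le_refl (1:ℝ))
  · exact up_bound_XE _ card_ELC_XE_le
  · exact lo_bound_XE _ card_ELC_XE_ge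

lemma up_bound_YE (u : ℕ → ℕ) (hu : ∀ n, 2 ≤ n → u n ≤ 3 * ((n + 2) * 2 ^ n)) :
    ∀ᶠ n in atTop, (u n : ℝ) ≤ 3 * ((n : ℝ) + 2) * 2 ^ n := by
  filter_upwards [eventually_ge_atTop 2] with n hn
  calc (u n : ℝ) ≤ ((3 * ((n + 2) * 2 ^ n) : ℕ) : ℝ) := by exact_mod_cast hu n hn
    _ = 3 * ((n : ℝ) + 2) * 2 ^ n := by push_cast; ring

lemma hC_YE_le : hC YE ≤ Real.log 2 := by
  unfold hC
  rw [max0_log]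
  apply limsup_le_of_card_le (b := 2) (C := 3) (by norm_num) (by norm_num)
  exact up_bound_YE _ (fun n hn => card_LC_YE_le n hn)

lemma hCstar_YE_le : hCstar YE ≤ Real.log 2 := by
  unfold hCstar
  apply limsup_le_of_card_le (b := 2) (C := 3) (by norm_num) (by norm_num)
  apply up_bound_YE
  intro n hn
  exact le_trans (Nat.card_mono (LC_finite YE n) (ELC_subset_LC YE n)) (card_LC_YE_le n hn)

lemma log23 : Real.log 2 < Real.log 3 := Real.log_lt_log (by norm_num) (by norm_num)


/-- There is a subshift `X` with
`h_𝒞(X̄) < h_𝒞(X) = h_top(X)` and `h*_𝒞(X̄) < h*_𝒞(X) = h_top(X)`;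
in particular the (extendable) left constraint entropies of a subshift and its
time reversal can differ, and a QFT can satisfy `h_𝒞(X) = h_top(X)`. -/
theorem reversal_asymmetry :
    ∃ (A : Type) (_ : Fintype A) (X : Set (ℤ → A)),
      (letI : TopologicalSpace A := ⊥
       IsSubshift X ∧ IsQFT X) ∧
      hC (rev X) < hC X ∧ hC X = hTop X ∧
      hCstar (rev X) < hCstar X ∧ hCstar X = hTop X := by
  refine ⟨Alph, inferInstance, XE, ⟨⟨XE_closed, shift_XE⟩, ⟨XE_closed, shift_XE⟩, ?_⟩,
    ?_, ?_, ?_, ?_⟩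
  · show hSC XE < hTop XE
    rw [hTop_XE]
    apply lt_of_le_of_lt (min_le_right _ _)
    rw [rev_XE]
    exact lt_of_le_of_lt hC_YE_le log23
  · rw [rev_XE, hC_XE]
    exact lt_of_le_of_lt hC_YE_le log23
  · rw [hC_XE, hTop_XE]
  · rw [rev_XE, hCstar_XE]
    exact lt_of_le_of_lt hCstar_YE_le log23
  · rw [hCstar_XE, hTop_XE]



end QFTPaper
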